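/- If G_1 and G_2 are graphs on n vertices with (Δ(G_1)+1)(Δ(G_2)+1) ≤ n+1, then any pair of bijective labellings of G_1 and G_2 into [n] that minimizes the number of purple edges has the property that the graph induced by the purple edges has maximum degree at most 1. -/

import Mathlib

open Finset


/-- The number of (ordered) purple pairs induced by a pair of labellings
`τ1, τ2` of `G1` and `G2`. -/
def pcount2 {n : ℕ} (G1 G2 : SimpleGraph (Fin n))
    [DecidableRel G1.Adj] [DecidableRel G2.Adj] (τ1 τ2 : Equiv.Perm (Fin n)) : ℕ :=
  (Finset.univ.filter fun p : Fin n × Fin n =>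
    G1.Adj (τ1.symm p.1) (τ1.symm p.2) ∧ G2.Adj (τ2.symm p.1) (τ2.symm p.2)).card

private lemma swap_count {n : ℕ} (P1 P2 : Fin n → Fin n → Prop)
    [DecidableRel P1] [DecidableRel P2]
    (h1s : ∀ a b, P1 a b ↔ P1 b a) (h2s : ∀ a b, P2 a b ↔ P2 b a)
    (h1i : ∀ a, ¬ P1 a a) (h2i : ∀ a, ¬ P2 a a)
    (i v : Fin n) (hvi : v ≠ i) (hP1 : ¬ P1 i v) (hP2 : ¬ P2 i v) :
    ((univ.filter fun p : Fin n × Fin n =>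
        P1 p.1 p.2 ∧ P2 (Equiv.swap i v p.1) (Equiv.swap i v p.2)).card : ℤ)
      = (univ.filter fun p : Fin n × Fin n => P1 p.1 p.2 ∧ P2 p.1 p.2).card
        + 2 * (((univ.filter fun b => P1 i b ∧ P2 v b).card : ℤ)
             + (univ.filter fun b => P1 v b ∧ P2 i b).card
             - (univ.filter fun b => P1 i b ∧ P2 i b).card
             - (univ.filter fun b => P1 v b ∧ P2 v b).card) := by
  set s : Equiv.Perm (Fin n) := Equiv.swap i v with hs
  have hsi : s i = v := Equiv.swap_apply_left i v
  have hsv : s v = i := Equiv.swap_apply_right i v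
  have hso : ∀ a, a ≠ i → a ≠ v → s a = a := fun a h1 h2 =>
    Equiv.swap_apply_of_ne_of_ne h1 h2
  set d : Fin n → Fin n → ℤ := fun a b =>
    (if P1 a b ∧ P2 (s a) (s b) then 1 else 0) - (if P1 a b ∧ P2 a b then 1 else 0) with hd
  -- basic facts about d
  have hd0 : ∀ a b, a ≠ i → a ≠ v → b ≠ i → b ≠ v → d a b = 0 := by
    intro a b ha1 ha2 hb1 hb2
    simp [hd, hso a ha1 ha2, hso b hb1 hb2]
  have hdsymm : ∀ a b, d a b = d b a := by
    intro a b
    simp only [hd]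
    rw [if_congr (and_congr (h1s a b) (h2s _ _)) rfl rfl,
        if_congr (and_congr (h1s a b) (h2s _ _)) rfl rfl]
  have hdii : d i i = 0 := by simp [hd, h1i]
  have hdvv : d v v = 0 := by simp [hd, h1i]
  have hdiv : d i v = 0 := by simp [hd, hP1]
  have hP1' : ¬ P1 v i := fun h => hP1 ((h1s v i).mp h)
  have hdvi : d v i = 0 := by simp [hd, hP1']
  have hne : i ≠ v := hvi.symm
  -- row sums
  have hrow : ∀ a, a ≠ i → a ≠ v → (∑ b, d a b) = d a i + d a v := by
    intro a ha1 ha2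
    rw [← Finset.sum_subset (Finset.subset_univ ({i, v} : Finset (Fin n)))
      (fun b _ hb => by
        simp only [Finset.mem_insert, Finset.mem_singleton, not_or] at hb
        exact hd0 a b ha1 ha2 hb.1 hb.2)]
    exact Finset.sum_pair hne
  -- total sum
  have htot : (∑ a, ∑ b, d a b) = 2 * ((∑ b, d i b) + (∑ b, d v b)) := by
    have h1 : ∑ a ∈ univ \ ({i, v} : Finset (Fin n)), (∑ b, d a b)
        + ∑ a ∈ ({i, v} : Finset (Fin n)), (∑ b, d a b) = ∑ a, ∑ b, d a b :=
      Finset.sum_sdiff (Finset.subset_univ _)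
    have h2 : ∑ a ∈ univ \ ({i, v} : Finset (Fin n)), (∑ b, d a b)
        = ∑ a ∈ univ \ ({i, v} : Finset (Fin n)), (d i a + d v a) := by
      apply Finset.sum_congr rfl
      intro a ha
      simp only [Finset.mem_sdiff, Finset.mem_insert, Finset.mem_singleton, not_or] at ha
      rw [hrow a ha.2.1 ha.2.2, hdsymm a i, hdsymm a v]
    have h3 : ∑ a ∈ univ \ ({i, v} : Finset (Fin n)), (d i a + d v a)
        + ∑ a ∈ ({i, v} : Finset (Fin n)), (d i a + d v a)
        = ∑ a, (d i a + d v a) := Finset.sum_sdiff (Finset.subset_univ _)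
    have h4 : ∑ a ∈ ({i, v} : Finset (Fin n)), (d i a + d v a) = 0 := by
      rw [Finset.sum_pair hne, hdii, hdvv, hdiv, hdvi]; ring
    have h5 : ∑ a ∈ ({i, v} : Finset (Fin n)), (∑ b, d a b)
        = (∑ b, d i b) + (∑ b, d v b) := Finset.sum_pair hne
    have h6 : ∑ a, (d i a + d v a) = (∑ b, d i b) + (∑ b, d v b) :=
      Finset.sum_add_distrib
    rw [← h1, h2, h5]
    have := h3
    rw [h4, add_zero, h6] at this
    rw [this]; ring
  -- row i
  have hRi : (∑ b, d i b)
      = ((univ.filter fun b => P1 i b ∧ P2 v b).card : ℤ)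
        - (univ.filter fun b => P1 i b ∧ P2 i b).card := by
    simp only [hd, hsi]
    rw [Finset.sum_sub_distrib]
    congr 1
    · have heq : ∑ b, (if P1 i b ∧ P2 v (s b) then (1:ℤ) else 0)
          = ∑ b, (if P1 i b ∧ P2 v b then (1:ℤ) else 0) := by
        apply Fintype.sum_equiv s
        intro x
        by_cases hx1 : x = i
        · subst hx1; simp [hsi, h1i, hP1]
        by_cases hx2 : x = v
        · subst hx2; simp [hsv, h1i, hP1]
        · rw [hso x hx1 hx2]
      rw [heq, Finset.card_filter]
      push_cast
      rfl
    · rw [Finset.card_filter]; push_cast; rfl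
  -- row v
  have hRv : (∑ b, d v b)
      = ((univ.filter fun b => P1 v b ∧ P2 i b).card : ℤ)
        - (univ.filter fun b => P1 v b ∧ P2 v b).card := by
    simp only [hd, hsv]
    rw [Finset.sum_sub_distrib]
    congr 1
    · have heq : ∑ b, (if P1 v b ∧ P2 i (s b) then (1:ℤ) else 0)
          = ∑ b, (if P1 v b ∧ P2 i b then (1:ℤ) else 0) := by
        apply Fintype.sum_equiv s
        intro x
        by_cases hx1 : x = i
        · subst hx1; simp [hsi, h1i, hP1']
        by_cases hx2 : x = v
        · subst hx2; simp [hsv, h1i, hP1']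
        · rw [hso x hx1 hx2]
      rw [heq, Finset.card_filter]
      push_cast
      rfl
    · rw [Finset.card_filter]; push_cast; rfl
  -- main identity
  have hkey : ((univ.filter fun p : Fin n × Fin n =>
        P1 p.1 p.2 ∧ P2 (s p.1) (s p.2)).card : ℤ)
      = (univ.filter fun p : Fin n × Fin n => P1 p.1 p.2 ∧ P2 p.1 p.2).card
        + ∑ a, ∑ b, d a b := by
    rw [Finset.card_filter, Finset.card_filter]
    push_cast
    rw [Fintype.sum_prod_type, Fintype.sum_prod_type]
    simp only [hd]
    rw [← Finset.sum_add_distrib]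
    apply Finset.sum_congr rfl
    intro a _
    rw [← Finset.sum_add_distrib]
    apply Finset.sum_congr rfl
    intro b _
    push_cast
    ring
  rw [hkey, htot, hRi, hRv]
  ring

private lemma exists_good {n : ℕ} (P1 P2 : Fin n → Fin n → Prop)
    [DecidableRel P1] [DecidableRel P2] (D1 D2 : ℕ)
    (h1 : ∀ a, (univ.filter (P1 a)).card ≤ D1)
    (h2 : ∀ a, (univ.filter (P2 a)).card ≤ D2)
    (h1c : ∀ b, (univ.filter (fun a => P1 a b)).card ≤ D1)
    (h2c : ∀ b, (univ.filter (fun a => P2 a b)).card ≤ D2)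
    (i : Fin n)
    (hp : 2 ≤ (univ.filter fun b => P1 i b ∧ P2 i b).card)
    (hn : (D1 + 1) * (D2 + 1) ≤ n + 1) :
    ∃ v, v ≠ i ∧ ¬ P1 i v ∧ ¬ P2 i v ∧
      (univ.filter fun b => P1 i b ∧ P2 v b).card +
      (univ.filter fun b => P1 v b ∧ P2 i b).card ≤ 1 := by
  by_contra hcon
  push_neg at hcon
  set A : Fin n → ℕ := fun v => (univ.filter fun b => P1 i b ∧ P2 v b).card with hA
  set B : Fin n → ℕ := fun v => (univ.filter fun b => P1 v b ∧ P2 i b).card with hB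
  set E : Finset (Fin n) :=
    insert i ((univ.filter (P1 i)) ∪ (univ.filter (P2 i))) with hE
  set T : Finset (Fin n) := univ.filter (fun v => 2 ≤ A v + B v) with hT
  -- cover
  have hcover : (univ : Finset (Fin n)) ⊆ E ∪ T := by
    intro v _
    by_cases hvE : v ∈ E
    · exact Finset.mem_union_left _ hvE
    · apply Finset.mem_union_right
      simp only [hE, Finset.mem_insert, Finset.mem_union, Finset.mem_filter,
        Finset.mem_univ, true_and, not_or] at hvE
      have hc := hcon v hvE.1 hvE.2.1 hvE.2.2
      simp only [hT, Finset.mem_filter, Finset.mem_univ, true_and, hA, hB]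
      omega
  have hcard : n ≤ E.card + T.card := by
    calc n = (univ : Finset (Fin n)).card := (Finset.card_fin n).symm
    _ ≤ (E ∪ T).card := Finset.card_le_card hcover
    _ ≤ E.card + T.card := Finset.card_union_le E T
  -- bound on sum of A
  have hsumA : ∑ v, A v ≤ D1 * D2 := by
    have hAeq : ∀ v, A v = ∑ b, if P1 i b ∧ P2 v b then 1 else 0 := by
      intro v; rw [hA]; exact Finset.card_filter _ _
    calc ∑ v, A v = ∑ v, ∑ b, if P1 i b ∧ P2 v b then 1 else 0 :=
          Finset.sum_congr rfl (fun v _ => hAeq v)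
      _ = ∑ b, ∑ v, if P1 i b ∧ P2 v b then 1 else 0 := Finset.sum_comm
      _ ≤ ∑ b, (if P1 i b then D2 else 0) := by
          apply Finset.sum_le_sum
          intro b _
          by_cases hb : P1 i b
          · simp only [hb, true_and, if_true]
            calc (∑ v, if P2 v b then 1 else 0)
                = (univ.filter fun v => P2 v b).card := (Finset.card_filter _ _).symm
              _ ≤ D2 := h2c b
          · simp [hb]
      _ = (univ.filter (P1 i)).card * D2 := by
          rw [← Finset.sum_filter, Finset.sum_const, smul_eq_mul]
      _ ≤ D1 * D2 := Nat.mul_le_mul_right _ (h1 i)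
  -- bound on sum of B
  have hsumB : ∑ v, B v ≤ D1 * D2 := by
    have hBeq : ∀ v, B v = ∑ b, if P1 v b ∧ P2 i b then 1 else 0 := by
      intro v; rw [hB]; exact Finset.card_filter _ _
    calc ∑ v, B v = ∑ v, ∑ b, if P1 v b ∧ P2 i b then 1 else 0 :=
          Finset.sum_congr rfl (fun v _ => hBeq v)
      _ = ∑ b, ∑ v, if P1 v b ∧ P2 i b then 1 else 0 := Finset.sum_comm
      _ ≤ ∑ b, (if P2 i b then D1 else 0) := by
          apply Finset.sum_le_sum
          intro b _
          by_cases hb : P2 i b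
          · simp only [hb, and_true, if_true]
            calc (∑ v, if P1 v b then 1 else 0)
                = (univ.filter fun v => P1 v b).card := (Finset.card_filter _ _).symm
              _ ≤ D1 := h1c b
          · simp [hb]
      _ = (univ.filter (P2 i)).card * D1 := by
          rw [← Finset.sum_filter, Finset.sum_const, smul_eq_mul]
      _ ≤ D2 * D1 := Nat.mul_le_mul_right _ (h2 i)
      _ = D1 * D2 := Nat.mul_comm _ _
  -- bound on T
  have hTbound : 2 * T.card ≤ 2 * (D1 * D2) := by
    calc 2 * T.card = ∑ _v ∈ T, 2 := by rw [Finset.sum_const, smul_eq_mul, Nat.mul_comm]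
      _ ≤ ∑ v ∈ T, (A v + B v) := by
          apply Finset.sum_le_sum
          intro v hv
          simp only [hT, Finset.mem_filter] at hv
          exact hv.2
      _ ≤ ∑ v, (A v + B v) := Finset.sum_le_sum_of_subset (Finset.subset_univ T)
      _ = ∑ v, A v + ∑ v, B v := Finset.sum_add_distrib
      _ ≤ 2 * (D1 * D2) := by omega
  -- bound on E
  have hEbound : E.card + 2 ≤ 1 + D1 + D2 := by
    have h1' : E.card ≤ 1 + ((univ.filter (P1 i)) ∪ (univ.filter (P2 i))).card := by
      calc E.card ≤ ((univ.filter (P1 i)) ∪ (univ.filter (P2 i))).card + 1 :=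
            Finset.card_insert_le _ _
        _ = 1 + _ := Nat.add_comm _ _
    have h2' : ((univ.filter (P1 i)) ∪ (univ.filter (P2 i))).card
          + ((univ.filter (P1 i)) ∩ (univ.filter (P2 i))).card
        = (univ.filter (P1 i)).card + (univ.filter (P2 i)).card :=
      Finset.card_union_add_card_inter _ _
    have h3' : (univ.filter (P1 i)) ∩ (univ.filter (P2 i))
        = univ.filter (fun b => P1 i b ∧ P2 i b) := (Finset.filter_and _ _ _).symm
    have h4' := h1 i
    have h5' := h2 i
    rw [h3'] at h2'
    omega
  have hexp : (D1 + 1) * (D2 + 1) = D1 * D2 + D1 + D2 + 1 := by ring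
  have hT2 : T.card ≤ D1 * D2 := by omega
  omega

private lemma card_filter_adj {n : ℕ} (G : SimpleGraph (Fin n)) [DecidableRel G.Adj]
    (σ : Equiv.Perm (Fin n)) (x : Fin n) :
    (univ.filter fun b => G.Adj (σ.symm x) (σ.symm b)).card = G.degree (σ.symm x) := by
  rw [← SimpleGraph.card_neighborFinset_eq_degree]
  have h : univ.filter (fun b => G.Adj (σ.symm x) (σ.symm b))
      = (G.neighborFinset (σ.symm x)).map σ.toEmbedding := by
    ext b
    simp only [Finset.mem_filter, Finset.mem_univ, true_and, Finset.mem_map,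
      SimpleGraph.mem_neighborFinset, Equiv.coe_toEmbedding]
    constructor
    · exact fun hadj => ⟨σ.symm b, hadj, σ.apply_symm_apply b⟩
    · rintro ⟨a, ha, rfl⟩
      rwa [σ.symm_apply_apply]
  rw [h, Finset.card_map]

/-- Eaton: under the BEC condition, a purple-minimizing pair of labellings has
purple graph of maximum degree at most 1. -/
theorem stmt_4 {n : ℕ} (G1 G2 : SimpleGraph (Fin n))
    [DecidableRel G1.Adj] [DecidableRel G2.Adj]
    (hBEC : (G1.maxDegree + 1) * (G2.maxDegree + 1) ≤ n + 1)
    (σ1 σ2 : Equiv.Perm (Fin n))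
    (hmin : ∀ τ1 τ2 : Equiv.Perm (Fin n),
      pcount2 G1 G2 σ1 σ2 ≤ pcount2 G1 G2 τ1 τ2) :
    ∀ i : Fin n, (Finset.univ.filter fun j : Fin n =>
      G1.Adj (σ1.symm i) (σ1.symm j) ∧ G2.Adj (σ2.symm i) (σ2.symm j)).card ≤ 1 := by
  intro i
  by_contra hcon
  push_neg at hcon
  have hp : 2 ≤ (univ.filter fun j : Fin n =>
      G1.Adj (σ1.symm i) (σ1.symm j) ∧ G2.Adj (σ2.symm i) (σ2.symm j)).card := hcon
  -- degree bounds
  have h1 : ∀ a, (univ.filter fun b => G1.Adj (σ1.symm a) (σ1.symm b)).card ≤ G1.maxDegree :=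
    fun a => (card_filter_adj G1 σ1 a).le.trans (SimpleGraph.degree_le_maxDegree G1 _)
  have h2 : ∀ a, (univ.filter fun b => G2.Adj (σ2.symm a) (σ2.symm b)).card ≤ G2.maxDegree :=
    fun a => (card_filter_adj G2 σ2 a).le.trans (SimpleGraph.degree_le_maxDegree G2 _)
  have h1c : ∀ b, (univ.filter fun a => G1.Adj (σ1.symm a) (σ1.symm b)).card ≤ G1.maxDegree := by
    intro b
    have : (univ.filter fun a => G1.Adj (σ1.symm a) (σ1.symm b))
        = (univ.filter fun a => G1.Adj (σ1.symm b) (σ1.symm a)) := by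
      apply Finset.filter_congr
      intro a _
      exact G1.adj_comm _ _
    rw [this]; exact h1 b
  have h2c : ∀ b, (univ.filter fun a => G2.Adj (σ2.symm a) (σ2.symm b)).card ≤ G2.maxDegree := by
    intro b
    have : (univ.filter fun a => G2.Adj (σ2.symm a) (σ2.symm b))
        = (univ.filter fun a => G2.Adj (σ2.symm b) (σ2.symm a)) := by
      apply Finset.filter_congr
      intro a _
      exact G2.adj_comm _ _
    rw [this]; exact h2 b
  obtain ⟨v, hvne, hv1, hv2, hvAB⟩ :=
    exists_good (fun a b => G1.Adj (σ1.symm a) (σ1.symm b))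
      (fun a b => G2.Adj (σ2.symm a) (σ2.symm b))
      G1.maxDegree G2.maxDegree h1 h2 h1c h2c i hp hBEC
  have hkey := swap_count (fun a b => G1.Adj (σ1.symm a) (σ1.symm b))
      (fun a b => G2.Adj (σ2.symm a) (σ2.symm b))
      (fun a b => G1.adj_comm _ _) (fun a b => G2.adj_comm _ _)
      (fun a => G1.irrefl) (fun a => G2.irrefl)
      i v hvne hv1 hv2
  beta_reduce at hkey
  have hmin' := hmin σ1 (σ2.trans (Equiv.swap i v))
  simp only [pcount2, Equiv.symm_trans_apply, Equiv.symm_swap] at hmin'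
  have hmin'' : ((univ.filter fun p : Fin n × Fin n => G1.Adj (σ1.symm p.1) (σ1.symm p.2) ∧
      G2.Adj (σ2.symm p.1) (σ2.symm p.2)).card : ℤ) ≤
      (univ.filter fun p : Fin n × Fin n => G1.Adj (σ1.symm p.1) (σ1.symm p.2) ∧
      G2.Adj (σ2.symm (Equiv.swap i v p.1)) (σ2.symm (Equiv.swap i v p.2))).card := by
    exact_mod_cast hmin'
  have hkey' : ((univ.filter fun p : Fin n × Fin n => G1.Adj (σ1.symm p.1) (σ1.symm p.2) ∧
      G2.Adj (σ2.symm (Equiv.swap i v p.1)) (σ2.symm (Equiv.swap i v p.2))).card : ℤ)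
      = (univ.filter fun p : Fin n × Fin n => G1.Adj (σ1.symm p.1) (σ1.symm p.2) ∧
          G2.Adj (σ2.symm p.1) (σ2.symm p.2)).card
        + 2 * (((univ.filter fun b => G1.Adj (σ1.symm i) (σ1.symm b) ∧ G2.Adj (σ2.symm v) (σ2.symm b)).card : ℤ)
             + (univ.filter fun b => G1.Adj (σ1.symm v) (σ1.symm b) ∧ G2.Adj (σ2.symm i) (σ2.symm b)).card
             - (univ.filter fun b => G1.Adj (σ1.symm i) (σ1.symm b) ∧ G2.Adj (σ2.symm i) (σ2.symm b)).card
             - (univ.filter fun b => G1.Adj (σ1.symm v) (σ1.symm b) ∧ G2.Adj (σ2.symm v) (σ2.symm b)).card) :=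
    hkey
  omega
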